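/- Suppose each objective f_i is M_i-relatively Lipschitz continuous and, when used at a productive step t, μ_t-relatively strongly convex w.r.t. h, and the constraint g is M_g-relatively Lipschitz continuous and μ_g-relatively strongly convex w.r.t. h; at each non-productive step t set μ_t = μ_g, and assume μ_{1:t} = Σ_{s=1}^t μ_s > 0 for all t. Set M = max of all the M_i and M_g. If the switching mirror-descent algorithm with step sizes η_t = 1/μ_{1:t} and threshold ε > 0 performs exactly T productive steps and T_J non-productive steps, and Regret_T ≥ 0, then Regret_T ≤ Σ_{t=1}^{T+T_J} M²/μ_{1:t} − ε·T_J, while g(x_t) ≤ ε at every productive step t. -/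

import Mathlib

open scoped RealInnerProductSpace
open Finset

/-- The Bregman divergence `V(y,x) = h(y) − h(x) − ⟨∇h(x), y − x⟩`. -/
noncomputable def breg {E : Type*} [NormedAddCommGroup E] [InnerProductSpace ℝ E]
    [CompleteSpace E] (h : E → ℝ) (y x : E) : ℝ :=
  h y - h x - ⟪gradient h x, y - x⟫

/-- `f` is `M`-relatively Lipschitz continuous w.r.t. the prox-function `h` on `Q`. -/
noncomputable def RelLipschitz {E : Type*} [NormedAddCommGroup E] [InnerProductSpace ℝ E]
    [CompleteSpace E] (h : E → ℝ) (Q : Set E) (M : ℝ) (f : E → ℝ) : Prop :=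
  ∀ x ∈ Q, ∀ y ∈ Q, 0 ≤ ⟪gradient f x, y - x⟫ + M * Real.sqrt (2 * breg h y x)

/-- `f` is `μ`-relatively strongly convex w.r.t. the prox-function `h` on `Q`. -/
noncomputable def RelStrongConvex {E : Type*} [NormedAddCommGroup E] [InnerProductSpace ℝ E]
    [CompleteSpace E] (h : E → ℝ) (Q : Set E) (μ : ℝ) (f : E → ℝ) : Prop :=
  ∀ x ∈ Q, ∀ y ∈ Q, f y + ⟪gradient f y, x - y⟫ + μ * breg h x y ≤ f x

/-- One mirror-descent step from `x` with step size `η` in the direction `v`: there is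
`y` with `∇h(y) = ∇h(x) − η·v`, and the next iterate `x'` is the Bregman projection of
`y` onto `Q`. -/
noncomputable def MDStepV {E : Type*} [NormedAddCommGroup E] [InnerProductSpace ℝ E]
    [CompleteSpace E] (h : E → ℝ) (Q : Set E) (η : ℝ) (v : E) (x x' : E) : Prop :=
  ∃ y : E, gradient h y = gradient h x - η • v ∧ x' ∈ Q ∧
    IsMinOn (fun z => breg h z y) Q x'

section Aux
variable {E : Type*} [NormedAddCommGroup E] [InnerProductSpace ℝ E] [CompleteSpace E]

lemma fderiv_apply_eq_inner_gradient (φ : E → ℝ) (x v : E) :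
    fderiv ℝ φ x v = ⟪gradient φ x, v⟫ := by
  rw [gradient, ← InnerProductSpace.toDual_apply_apply, LinearIsometryEquiv.apply_symm_apply]

lemma convex_grad_ineq {φ : E → ℝ} (hφd : Differentiable ℝ φ)
    (hφc : ConvexOn ℝ Set.univ φ) (x y : E) :
    ⟪gradient φ x, y - x⟫ ≤ φ y - φ x := by
  set q : ℝ → ℝ := fun t => φ (x + t • (y - x)) with hq
  have hqc : ConvexOn ℝ Set.univ q := by
    have h1 := hφc.comp_affineMap (AffineMap.lineMap x y : ℝ →ᵃ[ℝ] E)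
    have h2 : (φ ∘ (AffineMap.lineMap x y : ℝ →ᵃ[ℝ] E)) = q := by
      funext t
      simp [q, AffineMap.lineMap_apply, add_comm]
    rw [h2] at h1
    simpa using h1
  have hline : HasDerivAt (fun t : ℝ => x + t • (y - x)) (y - x) 0 := by
    simpa using ((hasDerivAt_id (0 : ℝ)).smul_const (y - x)).const_add x
  have hF : HasFDerivAt φ (fderiv ℝ φ x) (x + (0 : ℝ) • (y - x)) := by
    simpa using (hφd x).hasFDerivAt
  have hd : HasDerivAt q (fderiv ℝ φ x (y - x)) 0 := hF.comp_hasDerivAt 0 hline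
  have := hqc.le_slope_of_hasDerivAt (Set.mem_univ 0) (Set.mem_univ 1) one_pos hd
  rw [fderiv_apply_eq_inner_gradient] at this
  have hslope : slope q 0 1 = φ y - φ x := by
    simp [slope, q]
  rw [hslope] at this
  exact this

lemma breg_nonneg {h : E → ℝ} (hd : Differentiable ℝ h)
    (hc : ConvexOn ℝ Set.univ h) (y x : E) : 0 ≤ breg h y x := by
  have := convex_grad_ineq hd hc x y
  simp only [breg]
  linarith

lemma breg_three (h : E → ℝ) (u x x' : E) :
    ⟪gradient h x - gradient h x', u - x'⟫ = breg h u x' + breg h x' x - breg h u x := by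
  simp only [breg, inner_sub_left, inner_sub_right]
  ring

lemma proj_vi {Q : Set E} (hQconv : Convex ℝ Q) {h : E → ℝ} (hd : Differentiable ℝ h)
    {y x' : E} (hx' : x' ∈ Q) (hmin : IsMinOn (fun z => breg h z y) Q x')
    {u : E} (hu : u ∈ Q) : 0 ≤ ⟪gradient h x' - gradient h y, u - x'⟫ := by
  set g := gradient h y with hg
  have h2 : HasFDerivAt (fun z : E => h y + ⟪g, z - y⟫)
      (InnerProductSpace.toDual ℝ E g : E →L[ℝ] ℝ) x' := by
    have hb : HasFDerivAt (fun z : E => (InnerProductSpace.toDual ℝ E g) z)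
        (InnerProductSpace.toDual ℝ E g : E →L[ℝ] ℝ) x' :=
      (InnerProductSpace.toDual ℝ E g).hasFDerivAt
    have : (fun z : E => h y + ⟪g, z - y⟫)
        = fun z : E => ((InnerProductSpace.toDual ℝ E g) z - ⟪g, y⟫) + h y := by
      funext z
      simp [InnerProductSpace.toDual_apply_apply, inner_sub_right]
      ring
    rw [this]
    exact (hb.sub_const _).add_const _
  have hF : HasFDerivAt (fun z => breg h z y)
      (fderiv ℝ h x' - (InnerProductSpace.toDual ℝ E g : E →L[ℝ] ℝ)) x' := by
    have h1 : HasFDerivAt h (fderiv ℝ h x') x' := (hd x').hasFDerivAt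
    have : (fun z => breg h z y) = fun z => h z - (h y + ⟪g, z - y⟫) := by
      funext z; simp only [breg, ← hg]; ring
    rw [this]
    exact h1.sub h2
  have hcone : u - x' ∈ posTangentConeAt Q x' :=
    sub_mem_posTangentConeAt_of_segment_subset (hQconv.segment_subset hx' hu)
  have := hmin.localize.hasFDerivWithinAt_nonneg hF.hasFDerivWithinAt hcone
  rw [ContinuousLinearMap.sub_apply, fderiv_apply_eq_inner_gradient,
    InnerProductSpace.toDual_apply_apply] at this
  rw [inner_sub_left]; exact this

lemma md_step_key {Q : Set E} (hQconv : Convex ℝ Q) {h : E → ℝ}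
    (hd : Differentiable ℝ h) (hc : ConvexOn ℝ Set.univ h)
    {η M : ℝ} (hη : 0 < η) {φ : E → ℝ} {x x' u : E}
    (hu : u ∈ Q)
    (hstep : MDStepV h Q η (gradient φ x) x x')
    (hLip : ∀ y ∈ Q, 0 ≤ ⟪gradient φ x, y - x⟫ + M * Real.sqrt (2 * breg h y x)) :
    η * ⟪gradient φ x, x - u⟫ ≤ η ^ 2 * M ^ 2 / 2 + breg h u x - breg h u x' := by
  obtain ⟨y, hy, hx'Q, hmin⟩ := hstep
  set v := gradient φ x with hv
  have hvi := proj_vi hQconv hd hx'Q hmin hu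
  have h3 := breg_three h u x x'
  have hlip := hLip x' hx'Q
  have hV : 0 ≤ breg h x' x := breg_nonneg hd hc _ _
  set s := Real.sqrt (2 * breg h x' x) with hs
  have hsq : s ^ 2 = 2 * breg h x' x := Real.sq_sqrt (by linarith)
  have hsub : gradient h x - gradient h y = η • v := by rw [hy]; abel
  have e3 : ⟪gradient h x - gradient h y, u - x'⟫ = η * ⟪v, u - x'⟫ := by
    rw [hsub, real_inner_smul_left]
  have e4 : ⟪gradient h x - gradient h y, u - x'⟫
      = ⟪gradient h x - gradient h x', u - x'⟫ + ⟪gradient h x' - gradient h y, u - x'⟫ := by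
    rw [show gradient h x - gradient h y
        = (gradient h x - gradient h x') + (gradient h x' - gradient h y) by abel,
      inner_add_left]
  have hA : breg h u x' + breg h x' x - breg h u x ≤ η * ⟪v, u - x'⟫ := by
    rw [← e3, e4]; linarith
  have eC : ⟪v, x - u⟫ = -⟪v, u - x'⟫ + ⟪v, x - x'⟫ := by
    rw [show x - u = -(u - x') + (x - x') by abel, inner_add_right, inner_neg_right]
  have hBlip : ⟪v, x - x'⟫ ≤ M * s := by
    have : ⟪v, x - x'⟫ = -⟪v, x' - x⟫ := by
      rw [show x - x' = -(x' - x) by abel, inner_neg_right]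
    linarith
  have hB : η * ⟪v, x - x'⟫ ≤ η ^ 2 * M ^ 2 / 2 + breg h x' x := by
    have h1 : η * ⟪v, x - x'⟫ ≤ η * (M * s) :=
      mul_le_mul_of_nonneg_left hBlip hη.le
    nlinarith [sq_nonneg (η * M - s)]
  calc η * ⟪v, x - u⟫ = -(η * ⟪v, u - x'⟫) + η * ⟪v, x - x'⟫ := by rw [eC]; ring
    _ ≤ -(breg h u x' + breg h x' x - breg h u x) + (η ^ 2 * M ^ 2 / 2 + breg h x' x) := by
        linarith
    _ = η ^ 2 * M ^ 2 / 2 + breg h u x - breg h u x' := by ring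

lemma per_step {Q : Set E} (hQconv : Convex ℝ Q) {h : E → ℝ}
    (hd : Differentiable ℝ h) (hc : ConvexOn ℝ Set.univ h)
    {A Ap μt M : ℝ} (hA : 0 < A) (hAeq : A = Ap + μt)
    {φ : E → ℝ} {x x' u : E} (hu : u ∈ Q)
    (hstep : MDStepV h Q (1 / A) (gradient φ x) x x')
    (hLip : ∀ y ∈ Q, 0 ≤ ⟪gradient φ x, y - x⟫ + M * Real.sqrt (2 * breg h y x))
    (hSC : φ x + ⟪gradient φ x, u - x⟫ + μt * breg h u x ≤ φ u) :
    φ x - φ u ≤ M ^ 2 / (2 * A) + Ap * breg h u x - A * breg h u x' := by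
  have hη : 0 < 1 / A := by positivity
  have key := md_step_key hQconv hd hc hη hu hstep hLip
  have h1 := mul_le_mul_of_nonneg_left key hA.le
  have e1 : A * (1 / A * ⟪gradient φ x, x - u⟫) = ⟪gradient φ x, x - u⟫ := by
    field_simp
  have e2 : A * ((1 / A) ^ 2 * M ^ 2 / 2 + breg h u x - breg h u x')
      = M ^ 2 / (2 * A) + A * breg h u x - A * breg h u x' := by
    field_simp
  rw [e1, e2] at h1
  have h2 : ⟪gradient φ x, u - x⟫ = -⟪gradient φ x, x - u⟫ := by
    rw [show u - x = -(x - u) by abel, inner_neg_right]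
  have h3 : A * breg h u x - μt * breg h u x = Ap * breg h u x := by
    rw [hAeq]; ring
  linarith

lemma telescope_icc (G : ℕ → ℝ) (N : ℕ) :
    ∑ t ∈ Finset.Icc 1 N, (G (t - 1) - G t) = G 0 - G N := by
  induction N with
  | zero => simp
  | succ n ih =>
    rw [Finset.sum_Icc_succ_top (by omega), ih]
    simp

end Aux

/-- Theorem 4 (Mirror Descent for constrained online optimization with step-dependent
relative strong convexity parameters): with `η_t = 1/μ_{1:t}` (where `μ_t = μ_g` at
non-productive steps) and threshold `ε > 0`, if the run makes exactly `T` productive steps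
(the `i`-th at step index `σ i`, using objective `f i`) and `T_J` non-productive steps and
the regret is nonnegative, then `g(x_t) ≤ ε` at every productive step and
`Regret_T ≤ Σ_{t=1}^{T+T_J} M²/μ_{1:t} − ε·T_J`. -/
theorem switching_mirror_descent_varying_mu
    {E : Type*} [NormedAddCommGroup E] [InnerProductSpace ℝ E] [FiniteDimensional ℝ E]
    (Q : Set E) (hQne : Q.Nonempty) (hQclosed : IsClosed Q) (hQconv : Convex ℝ Q)
    (h : E → ℝ) (hdiff : Differentiable ℝ h) (hconv : ConvexOn ℝ Set.univ h)
    (T TJ : ℕ) (hT : 0 < T)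
    (f : Fin T → E → ℝ) (g : E → ℝ)
    (hfdiff : ∀ i, Differentiable ℝ (f i)) (hgdiff : Differentiable ℝ g)
    (hfconv : ∀ i, ConvexOn ℝ Set.univ (f i)) (hgconv : ConvexOn ℝ Set.univ g)
    (Mi : Fin T → ℝ) (Mg μg : ℝ) (μ : ℕ → ℝ)
    (hfLip : ∀ i, RelLipschitz h Q (Mi i) (f i)) (hgLip : RelLipschitz h Q Mg g)
    (hgSC : RelStrongConvex h Q μg g)
    (M ε : ℝ) (hM : M = max (⨆ i, Mi i) Mg) (hε : 0 < ε)
    (hμpos : ∀ t ∈ Finset.Icc 1 (T + TJ), 0 < ∑ s ∈ Finset.Icc 1 t, μ s)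
    -- the iterates and the run of the switching algorithm:
    (x : ℕ → E) (hx1 : x 1 ∈ Q)
    (σ : Fin T → ℕ) (hσmono : StrictMono σ)
    (hσrange : ∀ i, σ i ∈ Finset.Icc 1 (T + TJ))
    (hproductive : ∀ t ∈ Finset.Icc 1 (T + TJ), (g (x t) ≤ ε ↔ ∃ i, σ i = t))
    -- at the `i`-th productive step, `f i` is `μ_{σ i}`-relatively strongly convex:
    (hfSC : ∀ i, RelStrongConvex h Q (μ (σ i)) (f i))
    -- at non-productive steps, `μ_t = μ_g`:
    (hμg : ∀ t ∈ Finset.Icc 1 (T + TJ), (¬ ∃ i, σ i = t) → μ t = μg)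
    (hstepP : ∀ i : Fin T,
      MDStepV h Q (1 / ∑ s ∈ Finset.Icc 1 (σ i), μ s)
        (gradient (f i) (x (σ i))) (x (σ i)) (x (σ i + 1)))
    (hstepN : ∀ t ∈ Finset.Icc 1 (T + TJ), (¬ ∃ i, σ i = t) →
      MDStepV h Q (1 / ∑ s ∈ Finset.Icc 1 t, μ s)
        (gradient g (x t)) (x t) (x (t + 1)))
    -- the constrained minimizer x*:
    (xs : E) (hxsQ : xs ∈ Q) (hxsg : g xs ≤ 0)
    (hxsmin : ∀ y ∈ Q, g y ≤ 0 → ∑ i, f i xs ≤ ∑ i, f i y)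
    -- nonnegative regret:
    (hReg : 0 ≤ ∑ i, f i (x (σ i)) - ∑ i, f i xs) :
    (∀ i, g (x (σ i)) ≤ ε) ∧
    ∑ i, f i (x (σ i)) - ∑ i, f i xs ≤
      (∑ t ∈ Finset.Icc 1 (T + TJ), M ^ 2 / ∑ s ∈ Finset.Icc 1 t, μ s) - ε * TJ := by
  classical
  set N := T + TJ with hN
  set A : ℕ → ℝ := fun t => ∑ s ∈ Finset.Icc 1 t, μ s with hAdef
  have hMi : ∀ i, Mi i ≤ M := by
    intro i
    rw [hM]
    exact le_trans (le_ciSup (Set.Finite.bddAbove (Set.finite_range Mi)) i) (le_max_left _ _)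
  have hMg' : Mg ≤ M := hM ▸ le_max_right _ _
  have hprod : ∀ i : Fin T, g (x (σ i)) ≤ ε := fun i =>
    (hproductive (σ i) (hσrange i)).mpr ⟨i, rfl⟩
  refine ⟨hprod, ?_⟩
  -- iterates stay in Q
  have hxQ : ∀ t, 1 ≤ t → t ≤ N + 1 → x t ∈ Q := by
    intro t ht1
    induction t, ht1 using Nat.le_induction with
    | base => intro _; exact hx1
    | succ k hk ih =>
      intro hk2
      by_cases hp : ∃ i, σ i = k
      · obtain ⟨i, hi⟩ := hp
        obtain ⟨y, _, hxq, _⟩ := hstepP i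
        rw [hi] at hxq
        exact hxq
      · obtain ⟨y, _, hxq, _⟩ := hstepN k (by simp [Finset.mem_Icc]; omega) hp
        exact hxq
  -- the per-step quantity
  set r : ℕ → ℝ := fun t =>
    if ht : ∃ i, σ i = t then f ht.choose (x t) - f ht.choose xs else ε with hrdef
  have hAt : ∀ t, 1 ≤ t → A t = A (t - 1) + μ t := by
    intro t ht
    obtain ⟨k, rfl⟩ := Nat.exists_eq_add_of_le ht
    simp only [hAdef]
    rw [show 1 + k = k + 1 by omega, Finset.sum_Icc_succ_top (by omega)]
    simp
  -- per-step bound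
  have step : ∀ t, 1 ≤ t → t ≤ N →
      r t ≤ M ^ 2 / (2 * A t) + A (t - 1) * breg h xs (x t) - A t * breg h xs (x (t + 1)) := by
    intro t h1 h2
    have hAt0 : 0 < A t := hμpos t (by simp [Finset.mem_Icc]; omega)
    have hxtQ : x t ∈ Q := hxQ t h1 (by omega)
    by_cases hp : ∃ i, σ i = t
    · have hi : σ hp.choose = t := hp.choose_spec
      set i := hp.choose with hidef
      have hr : r t = f i (x t) - f i xs := by simp only [hrdef, dif_pos hp]; rfl
      have hLipM : ∀ y ∈ Q,
          0 ≤ ⟪gradient (f i) (x t), y - x t⟫ + M * Real.sqrt (2 * breg h y (x t)) := by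
        intro y hy
        have h0 := hfLip i (x t) hxtQ y hy
        have hs := Real.sqrt_nonneg (2 * breg h y (x t))
        nlinarith [mul_le_mul_of_nonneg_right (hMi i) hs]
      have hSC := hfSC i xs hxsQ (x t) hxtQ
      rw [hi] at hSC
      have hstep' := hstepP i
      rw [hi] at hstep'
      have := per_step hQconv hdiff hconv hAt0 (hAt t h1) hxsQ hstep' hLipM hSC
      rw [hr]
      exact this
    · have hr : r t = ε := by simp only [hrdef, dif_neg hp]
      have htmem : t ∈ Finset.Icc 1 N := by simp [Finset.mem_Icc]; omega
      have hgε : ε < g (x t) := by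
        by_contra hle
        exact hp ((hproductive t htmem).mp (le_of_not_gt hle))
      have hμt : μ t = μg := hμg t htmem hp
      have hLipM : ∀ y ∈ Q,
          0 ≤ ⟪gradient g (x t), y - x t⟫ + M * Real.sqrt (2 * breg h y (x t)) := by
        intro y hy
        have h0 := hgLip (x t) hxtQ y hy
        have hs := Real.sqrt_nonneg (2 * breg h y (x t))
        nlinarith [mul_le_mul_of_nonneg_right hMg' hs]
      have hSC := hgSC xs hxsQ (x t) hxtQ
      rw [← hμt] at hSC
      have hstep' := hstepN t htmem hp
      have := per_step hQconv hdiff hconv hAt0 (hAt t h1) hxsQ hstep' hLipM hSC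
      rw [hr]
      have : ε ≤ g (x t) - g xs := by linarith
      linarith [per_step hQconv hdiff hconv hAt0 (hAt t h1) hxsQ hstep' hLipM hSC]
  -- sum the per-step bounds
  have sum1 : ∑ t ∈ Finset.Icc 1 N, r t
      ≤ (∑ t ∈ Finset.Icc 1 N, M ^ 2 / (2 * A t))
        + ∑ t ∈ Finset.Icc 1 N,
            (A (t - 1) * breg h xs (x t) - A t * breg h xs (x (t + 1))) := by
    rw [← Finset.sum_add_distrib]
    apply Finset.sum_le_sum
    intro t ht
    rw [Finset.mem_Icc] at ht
    linarith [step t ht.1 ht.2]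
  -- telescoping
  set G : ℕ → ℝ := fun t => A t * breg h xs (x (t + 1)) with hGdef
  have htel : ∑ t ∈ Finset.Icc 1 N,
      (A (t - 1) * breg h xs (x t) - A t * breg h xs (x (t + 1))) = G 0 - G N := by
    rw [← telescope_icc G N]
    apply Finset.sum_congr rfl
    intro t ht
    rw [Finset.mem_Icc] at ht
    simp only [hGdef]
    rw [Nat.sub_add_cancel ht.1]
  have hG0 : G 0 = 0 := by
    simp [hGdef, hAdef]
  have hGN : 0 ≤ G N := by
    have hAN : 0 < A N := hμpos N (by simp [Finset.mem_Icc]; omega)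
    exact mul_nonneg hAN.le (breg_nonneg hdiff hconv _ _)
  have sum2 : ∑ t ∈ Finset.Icc 1 N, r t ≤ ∑ t ∈ Finset.Icc 1 N, M ^ 2 / (2 * A t) := by
    rw [htel, hG0] at sum1
    linarith
  have sum3 : ∑ t ∈ Finset.Icc 1 N, M ^ 2 / (2 * A t)
      ≤ ∑ t ∈ Finset.Icc 1 N, M ^ 2 / A t := by
    apply Finset.sum_le_sum
    intro t ht
    have hAt0 : 0 < A t := hμpos t ht
    have e : M ^ 2 / (2 * A t) = M ^ 2 / A t / 2 := by ring
    rw [e]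
    exact half_le_self (by positivity)
  -- split the sum of r
  set P : Finset ℕ := Finset.image σ Finset.univ with hPdef
  have hPsub : P ⊆ Finset.Icc 1 N := by
    intro t ht
    simp only [hPdef, Finset.mem_image] at ht
    obtain ⟨i, _, rfl⟩ := ht
    exact hσrange i
  have hsplit : ∑ t ∈ Finset.Icc 1 N \ P, r t + ∑ t ∈ P, r t = ∑ t ∈ Finset.Icc 1 N, r t :=
    Finset.sum_sdiff hPsub
  have hPsum : ∑ t ∈ P, r t = ∑ i, (f i (x (σ i)) - f i xs) := by
    rw [hPdef, Finset.sum_image (fun i _ j _ hij => hσmono.injective hij)]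
    apply Finset.sum_congr rfl
    intro i _
    have hp : ∃ j, σ j = σ i := ⟨i, rfl⟩
    simp only [hrdef, dif_pos hp]
    have : hp.choose = i := hσmono.injective hp.choose_spec
    rw [this]
  have hcard : (Finset.Icc 1 N \ P).card = TJ := by
    rw [Finset.card_sdiff_of_subset hPsub, hPdef,
      Finset.card_image_of_injective _ hσmono.injective]
    simp [hN]
  have hNPsum : ∑ t ∈ Finset.Icc 1 N \ P, r t = ε * TJ := by
    have : ∀ t ∈ Finset.Icc 1 N \ P, r t = ε := by
      intro t ht
      rw [Finset.mem_sdiff] at ht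
      have hp : ¬ ∃ i, σ i = t := by
        rintro ⟨i, rfl⟩
        exact ht.2 (by simp [hPdef])
      simp only [hrdef, dif_neg hp]
    rw [Finset.sum_congr rfl this, Finset.sum_const, hcard]
    simp [mul_comm]
  have hRegEq : ∑ i, f i (x (σ i)) - ∑ i, f i xs = ∑ i, (f i (x (σ i)) - f i xs) := by
    rw [Finset.sum_sub_distrib]
  rw [hRegEq]
  have final : ∑ i, (f i (x (σ i)) - f i xs) + ε * TJ ≤ ∑ t ∈ Finset.Icc 1 N, M ^ 2 / A t := by
    calc ∑ i, (f i (x (σ i)) - f i xs) + ε * TJ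
        = ∑ t ∈ Finset.Icc 1 N \ P, r t + ∑ t ∈ P, r t := by rw [hPsum, hNPsum]; ring
      _ = ∑ t ∈ Finset.Icc 1 N, r t := hsplit
      _ ≤ _ := le_trans sum2 sum3
  simp only [hAdef] at final
  linarith
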